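/- Let H ≤ Γ be countable groups, let H act on a countable set Y, and let Γ ↷ X be the induced action. Let Σ ≤ H be a subgroup acting freely on Y. If K ≤ Γ is a subgroup such that (⋃_{g∈Γ} gKg⁻¹) ∩ H ⊆ ⋃_{h∈H} hΣh⁻¹, then the restriction K ↷ X is free. -/

import Mathlib

/-- `C` is a Følner sequence for the action of `G` on `X` given by `π`. -/
def IsFolnerSeq {G X : Type*} [Group G] (π : G →* Equiv.Perm X) (C : ℕ → Set X) : Prop :=
  (∀ n, (C n).Finite ∧ (C n).Nonempty) ∧
    ∀ g : G, Filter.Tendsto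
      (fun n => ((symmDiff (C n) (π g '' C n)).ncard : ℝ) / (C n).ncard)
      Filter.atTop (nhds 0)

/-- The action of `G` on `X` given by `π` is amenable (admits a Følner sequence). -/
def IsAmenableAction {G X : Type*} [Group G] (π : G →* Equiv.Perm X) : Prop :=
  ∃ C : ℕ → Set X, IsFolnerSeq π C

/-- The action given by `π` has infinite orbits. -/
def HasInfiniteOrbits {G X : Type*} [Group G] (π : G →* Equiv.Perm X) : Prop :=
  ∀ x : X, {y : X | ∃ g : G, π g x = y}.Infinite

/-- The action given by `π` is transitive. -/
def IsTransitiveAction {G X : Type*} [Group G] (π : G →* Equiv.Perm X) : Prop :=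
  ∀ x y : X, ∃ g : G, π g x = y

/-- The action given by `π` is almost free: every non-trivial element has finitely many
fixed points. -/
def IsAlmostFreeAction {G X : Type*} [Group G] (π : G →* Equiv.Perm X) : Prop :=
  ∀ g : G, g ≠ 1 → {x : X | π g x = x}.Finite

/-- The class 𝒜 of countable groups admitting a faithful, transitive and amenable action
on an infinite countable set. -/
def InClassA (G : Type*) [Group G] : Prop :=
  ∃ (X : Type) (_ : Countable X) (_ : Infinite X) (π : G →* Equiv.Perm X),
    Function.Injective π ∧ IsTransitiveAction π ∧ IsAmenableAction π

/-- The class 𝒜_ℱ of countable groups admitting an amenable, almost free action with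
infinite orbits on a countable set. -/
def InClassAF (G : Type*) [Group G] : Prop :=
  ∃ (X : Type) (_ : Countable X) (π : G →* Equiv.Perm X),
    IsAmenableAction π ∧ IsAlmostFreeAction π ∧ HasInfiniteOrbits π
section InducedAction

variable {Γ : Type*} [Group Γ] (H : Subgroup Γ) {Y : Type*} (π : H →* Equiv.Perm Y)

/-- The equivalence relation on `Y × Γ` given by the diagonal `H`-action
`h • (y, g) = (h • y, h * g)`. -/
def indSetoid : Setoid (Y × Γ) where
  r p q := ∃ h : H, π h p.1 = q.1 ∧ (h : Γ) * p.2 = q.2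
  iseqv := by
    constructor
    · intro p
      exact ⟨1, by simp, by simp⟩
    · rintro p q ⟨h, h1, h2⟩
      refine ⟨h⁻¹, ?_, ?_⟩
      · rw [← h1]; simp
      · rw [← h2]; simp [mul_assoc]
    · rintro p q r ⟨h, h1, h2⟩ ⟨k, k1, k2⟩
      refine ⟨k * h, ?_, ?_⟩
      · rw [← k1, ← h1]; simp
      · rw [← k2, ← h2]; simp [mul_assoc]

/-- The underlying set `X = H \ (Y × Γ)` of the induced action. -/
def IndSpace : Type _ := Quotient (indSetoid H π)

/-- The induced action of `Γ` on `X = H \ (Y × Γ)`, given by `γ • [y, g] = [y, g * γ⁻¹]`. -/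
def indHom : Γ →* Equiv.Perm (IndSpace H π) where
  toFun γ :=
    { toFun := Quotient.map' (fun p => (p.1, p.2 * γ⁻¹))
        (by rintro p q ⟨h, h1, h2⟩; exact ⟨h, h1, by show (h : Γ) * (p.2 * _) = q.2 * _; rw [← h2, mul_assoc]⟩)
      invFun := Quotient.map' (fun p => (p.1, p.2 * γ))
        (by rintro p q ⟨h, h1, h2⟩; exact ⟨h, h1, by show (h : Γ) * (p.2 * _) = q.2 * _; rw [← h2, mul_assoc]⟩)
      left_inv := by
        intro x
        induction x using Quotient.inductionOn' with
        | h p => simp [Quotient.map'_mk'', mul_assoc]; rfl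
      right_inv := by
        intro x
        induction x using Quotient.inductionOn' with
        | h p => simp [Quotient.map'_mk'', mul_assoc]; rfl }
  map_one' := by
    apply Equiv.ext
    intro x
    induction x using Quotient.inductionOn' with
    | h p => change Quotient.mk'' _ = Quotient.mk'' _; simp
  map_mul' γ₁ γ₂ := by
    apply Equiv.ext
    intro x
    induction x using Quotient.inductionOn' with
    | h p => change Quotient.mk'' _ = Quotient.mk'' _; simp [mul_assoc]

end InducedAction

/-- **Lemma 2.5 (6).**  Let `H ≤ Γ` be countable groups, `H ↷ Y` an action on a countable
set and `Γ ↷ X` the induced action.  Let `Σ ≤ H` be a subgroup acting freely on `Y`.  If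
`K ≤ Γ` is a subgroup with `(⋃_{g ∈ Γ} gKg⁻¹) ∩ H ⊆ ⋃_{h ∈ H} hΣh⁻¹`, then the
restriction `K ↷ X` of the induced action is free. -/
theorem induced_action_free
    {Γ Y : Type*} [Group Γ] [Countable Γ] [Countable Y]
    (H : Subgroup Γ) (π : H →* Equiv.Perm Y)
    (Sig : Subgroup Γ) (hsub : Sig ≤ H)
    (hfree : ∀ h : H, (h : Γ) ∈ Sig → h ≠ 1 → ∀ y : Y, π h y ≠ y)
    (K : Subgroup Γ)
    (hcond : ∀ x : Γ, x ∈ H → (∃ g : Γ, g⁻¹ * x * g ∈ K) →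
       ∃ h : Γ, h ∈ H ∧ h⁻¹ * x * h ∈ Sig) :
    ∀ k : Γ, k ∈ K → k ≠ 1 → ∀ x : IndSpace H π, indHom H π k x ≠ x := by
  intro k hk hne x hx
  induction x using Quotient.inductionOn' with
  | h p =>
    obtain ⟨y, g⟩ := p
    have hrel : (indSetoid H π).r (y, g * k⁻¹) (y, g) := Quotient.eq''.mp hx
    obtain ⟨h, hy, hg⟩ := hrel
    -- h = g * k * g⁻¹
    have hcoe : (h : Γ) = g * k * g⁻¹ := by
      have h2 : (h : Γ) * (g * k⁻¹) = g := hg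
      calc (h : Γ) = ((h : Γ) * (g * k⁻¹)) * (g * k⁻¹)⁻¹ := by group
        _ = g * (g * k⁻¹)⁻¹ := by rw [h2]
        _ = g * k * g⁻¹ := by group
    have hKconj : ∃ g' : Γ, g'⁻¹ * (h : Γ) * g' = k ∧ g' = g := by
      refine ⟨g, ?_, rfl⟩
      rw [hcoe]; group
    obtain ⟨h', hh'H, hh'S⟩ := hcond (h : Γ) h.2 ⟨g, by rw [hcoe]; group; exact hk⟩
    set h'H : H := ⟨h', hh'H⟩
    set σ : H := h'H⁻¹ * h * h'H with hσdef
    have hσS : (σ : Γ) ∈ Sig := hh'S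
    have hne1 : h ≠ 1 := by
      intro h1
      apply hne
      have : (h : Γ) = 1 := by rw [h1]; rfl
      rw [hcoe] at this
      have : g⁻¹ * (g * k * g⁻¹) * g = g⁻¹ * 1 * g := by rw [this]
      group at this
      simpa using this
    have hσne : σ ≠ 1 := by
      intro h1
      apply hne1
      have h2 : h = h'H * σ * h'H⁻¹ := by rw [hσdef]; group
      rw [h1] at h2
      simpa using h2
    apply hfree σ hσS hσne (π h'H⁻¹ y)
    have : π σ (π h'H⁻¹ y) = π h'H⁻¹ (π h y) := by
      simp [hσdef, map_mul]
    rw [this, hy]
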